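/- For positive integers n and k, the n×n matrix M_{n,k} with entries (M_{n,k})_{j,l} = (k+n-l)!/(k+n-l+j-1)! satisfies, for n ≥ 2, the recurrence det M_{n,k} = ((n-1)! · k! · (k+1)!)/((k+n-1)! · (k+n)!) · det M_{n-1,k+2}. Consequently det M_{n,k} ≠ 0 for all n,k. -/

import Mathlib

open Finset Polynomial

lemma factq_pos (a : ℕ) : (0:ℚ) < (Nat.factorial a : ℚ) := by exact_mod_cast a.factorial_pos

lemma keyDet (m k : ℕ) :
    (Matrix.of fun j l : Fin (m+1) =>
        ((Nat.factorial (k + (m+1) - ((l : ℕ) + 1)) : ℚ) /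
          (Nat.factorial (k + (m+1) - ((l : ℕ) + 1) + (j : ℕ)) : ℚ))).det
      = (Nat.superFactorial m : ℚ) *
        ∏ l : Fin (m+1), ((Nat.factorial (k + (l:ℕ)) : ℚ) / (Nat.factorial (k + (l:ℕ) + m) : ℚ)) := by
  set M : Matrix (Fin (m+1)) (Fin (m+1)) ℚ :=
    Matrix.of fun j l : Fin (m+1) =>
        ((Nat.factorial (k + (m+1) - ((l : ℕ) + 1)) : ℚ) /
          (Nat.factorial (k + (m+1) - ((l : ℕ) + 1) + (j : ℕ)) : ℚ)) with hM
  set p : Fin (m+1) → ℚ[X] := fun j => ∏ t ∈ range (j : ℕ), (X + C ((m - t : ℕ) : ℚ)) with hp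
  have hmonic : ∀ j : Fin (m+1), (p j).Monic := fun j =>
    monic_prod_of_monic _ _ (fun t _ => monic_X_add_C _)
  have hdeg : ∀ j : Fin (m+1), (p j).natDegree = (j : ℕ) := by
    intro j
    rw [hp, natDegree_prod_of_monic _ _ (fun t _ => monic_X_add_C _)]
    rw [Finset.sum_congr rfl (fun x _ => natDegree_X_add_C ((m - x : ℕ) : ℚ)),
      Finset.sum_const, smul_eq_mul, mul_one, card_range]
  have heval : ∀ (j : Fin (m+1)) (x : ℕ), (p j).eval ((x : ℕ) : ℚ)
      = ((x + m).descFactorial (j : ℕ) : ℚ) := by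
    intro j x
    rw [Nat.descFactorial_eq_prod_range, hp, eval_prod, Nat.cast_prod]
    apply Finset.prod_congr rfl
    intro i hi
    have him : i ≤ m := by
      have h1 := mem_range.mp hi
      have h2 := j.isLt
      omega
    simp only [eval_add, eval_X, eval_C]
    rw [show x + m - i = x + (m - i) by omega]
    push_cast
    ring
  have h1 : M.det = (M.submatrix Fin.rev Fin.rev).det :=
    (Matrix.det_submatrix_equiv_self Fin.revPerm M).symm
  have h2 : M.submatrix Fin.rev Fin.rev = Matrix.of (fun j l : Fin (m+1) =>
      ((Nat.factorial (k + (l:ℕ)) : ℚ) / (Nat.factorial (k + (l:ℕ) + m) : ℚ)) *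
        (((k + (l:ℕ) + m).descFactorial (j:ℕ) : ℚ))) := by
    ext j l
    have hl : (l : ℕ) ≤ m := Nat.le_of_lt_succ l.isLt
    have hj : (j : ℕ) ≤ m := Nat.le_of_lt_succ j.isLt
    have hrl : ((Fin.rev l : Fin (m+1)) : ℕ) = m - (l : ℕ) := by
      simp [Fin.val_rev]
    have hrj : ((Fin.rev j : Fin (m+1)) : ℕ) = m - (j : ℕ) := by
      simp [Fin.val_rev]
    simp only [Matrix.submatrix_apply, hM, Matrix.of_apply, hrl, hrj]
    rw [show k + (m+1) - (m - (l:ℕ) + 1) = k + (l:ℕ) by omega]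
    rw [show k + (l:ℕ) + (m - (j:ℕ)) = k + (l:ℕ) + m - (j:ℕ) by omega]
    have key : ((Nat.factorial (k + (l:ℕ) + m - (j:ℕ)) : ℚ)) *
        ((k + (l:ℕ) + m).descFactorial (j:ℕ) : ℚ) = (Nat.factorial (k + (l:ℕ) + m) : ℚ) := by
      exact_mod_cast congrArg (Nat.cast : ℕ → ℚ)
        (Nat.factorial_mul_descFactorial (by omega : (j:ℕ) ≤ k + (l:ℕ) + m))
    have h₁ := (factq_pos (k + (l:ℕ) + m - (j:ℕ))).ne'
    have h₂ := (factq_pos (k + (l:ℕ) + m)).ne'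
    rw [div_mul_eq_mul_div, div_eq_div_iff h₁ h₂]
    linear_combination (-(Nat.factorial (k + (l:ℕ)) : ℚ)) * key
  have h3 : (Matrix.of (fun j l : Fin (m+1) =>
      ((Nat.factorial (k + (l:ℕ)) : ℚ) / (Nat.factorial (k + (l:ℕ) + m) : ℚ)) *
        (((k + (l:ℕ) + m).descFactorial (j:ℕ) : ℚ)))).det =
      (∏ l : Fin (m+1), ((Nat.factorial (k + (l:ℕ)) : ℚ) / (Nat.factorial (k + (l:ℕ) + m) : ℚ))) *
      (Matrix.of (fun j l : Fin (m+1) => (((k + (l:ℕ) + m).descFactorial (j:ℕ) : ℚ)))).det :=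
    Matrix.det_mul_row _ _
  have h4 : (Matrix.of (fun j l : Fin (m+1) =>
      (((k + (l:ℕ) + m).descFactorial (j:ℕ) : ℚ)))).det = (Nat.superFactorial m : ℚ) := by
    have ht : (Matrix.of (fun j l : Fin (m+1) => (((k + (l:ℕ) + m).descFactorial (j:ℕ) : ℚ)))).det
        = (Matrix.of (fun i j : Fin (m+1) => (p j).eval ((k + (i:ℕ) : ℕ) : ℚ))).det := by
      rw [← Matrix.det_transpose]
      congr 1
      ext i j
      simp only [Matrix.transpose_apply, Matrix.of_apply]
      rw [heval j (k + (i:ℕ))]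
    rw [ht, ← Matrix.det_eval_matrixOfPolynomials_eq_det_vandermonde _ p hdeg hmonic]
    rw [show (fun i : Fin (m+1) => ((k + (i:ℕ) : ℕ) : ℚ))
        = (fun i : Fin (m+1) => ((i:ℕ):ℚ) + (k:ℚ)) from funext fun i => by push_cast; ring,
      Matrix.det_vandermonde_add, Matrix.det_vandermonde_id_eq_superFactorial]
  rw [h1, h2, h3, h4]; ring

lemma sf_pos (m : ℕ) : 0 < Nat.superFactorial m := by
  induction m with
  | zero => simp
  | succ m ih => rw [Nat.superFactorial_succ]; exact Nat.mul_pos (Nat.factorial_pos _) ih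

lemma I1 (m k : ℕ) :
    Nat.factorial k * Nat.factorial (k+1) * ∏ l ∈ range (m+1), Nat.factorial (k+2+l)
      = (∏ l ∈ range (m+2), Nat.factorial (k+l)) * Nat.factorial (k+m+2) := by
  induction m with
  | zero => simp [Finset.prod_range_succ]
  | succ m ih =>
    rw [Finset.prod_range_succ, ← mul_assoc, ih, Finset.prod_range_succ (fun l => Nat.factorial (k+l)) (m+2)]
    rw [show k+2+(m+1) = k+(m+1)+2 by omega, show k+(m+2) = k+m+2 by omega]
    try ring

lemma I2 (m k : ℕ) :
    Nat.factorial (k+m+1) * ∏ l ∈ range (m+1), Nat.factorial (k+2+l+m)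
      = ∏ l ∈ range (m+2), Nat.factorial (k+l+(m+1)) := by
  rw [Finset.prod_range_succ' (fun l => Nat.factorial (k+l+(m+1))) (m+1)]
  rw [show k+0+(m+1) = k+m+1 by omega, mul_comm]
  congr 1
  apply Finset.prod_congr rfl
  intro l _
  congr 1
  omega

/-- For positive integers `n` and `k`, the `n × n` matrix `M_{n,k}` with entries
`(M_{n,k})_{j,l} = (k+n-l)!/(k+n-l+j-1)!` (for `1 ≤ j, l ≤ n`) satisfies, for `n ≥ 2`,
the recurrence
`det M_{n,k} = ((n-1)! · k! · (k+1)!)/((k+n-1)! · (k+n)!) · det M_{n-1,k+2}`.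
Consequently `det M_{n,k} ≠ 0` for all `n, k`. -/
theorem stmt_1 (n k : ℕ) (hn : 1 ≤ n) (hk : 1 ≤ k) :
    (2 ≤ n →
      (Matrix.of fun j l : Fin n =>
          ((Nat.factorial (k + n - ((l : ℕ) + 1)) : ℚ) /
            (Nat.factorial (k + n - ((l : ℕ) + 1) + (j : ℕ)) : ℚ))).det
        = ((Nat.factorial (n - 1) : ℚ) * (Nat.factorial k : ℚ) * (Nat.factorial (k + 1) : ℚ)) /
            ((Nat.factorial (k + n - 1) : ℚ) * (Nat.factorial (k + n) : ℚ)) *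
          (Matrix.of fun j l : Fin (n - 1) =>
            ((Nat.factorial ((k + 2) + (n - 1) - ((l : ℕ) + 1)) : ℚ) /
              (Nat.factorial ((k + 2) + (n - 1) - ((l : ℕ) + 1) + (j : ℕ)) : ℚ))).det) ∧
    (Matrix.of fun j l : Fin n =>
        ((Nat.factorial (k + n - ((l : ℕ) + 1)) : ℚ) /
          (Nat.factorial (k + n - ((l : ℕ) + 1) + (j : ℕ)) : ℚ))).det ≠ 0 := by
  obtain ⟨m', rfl⟩ : ∃ m', n = m' + 1 := ⟨n - 1, by omega⟩
  constructor
  · intro h2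
    obtain ⟨m, rfl⟩ : ∃ m, m' = m + 1 := ⟨m' - 1, by omega⟩
    rw [keyDet (m+1) k]
    simp only [Nat.add_sub_cancel]
    have hR : (Matrix.of fun j l : Fin (m+1+1-1) =>
        ((Nat.factorial (k + 2 + (m+1) - ((l : ℕ) + 1)) : ℚ) /
          (Nat.factorial (k + 2 + (m+1) - ((l : ℕ) + 1) + (j : ℕ)) : ℚ))).det
        = (Nat.superFactorial m : ℚ) *
          ∏ l : Fin (m+1), ((Nat.factorial (k+2+(l:ℕ)) : ℚ) /
            (Nat.factorial (k+2+(l:ℕ)+m) : ℚ)) := keyDet m (k+2)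
    rw [hR]
    rw [show k+(m+1+1)-1 = k+m+1 by omega, show k+(m+1+1) = k+m+2 by omega]
    rw [Fin.prod_univ_eq_prod_range
        (fun x => ((Nat.factorial (k+x) : ℚ) / (Nat.factorial (k+x+(m+1)) : ℚ))) (m+1+1),
      Fin.prod_univ_eq_prod_range
        (fun x => ((Nat.factorial (k+2+x) : ℚ) / (Nat.factorial (k+2+x+m) : ℚ))) (m+1),
      Finset.prod_div_distrib, Finset.prod_div_distrib]
    have hI1 := congrArg (Nat.cast : ℕ → ℚ) (I1 m k)
    have hI2 := congrArg (Nat.cast : ℕ → ℚ) (I2 m k)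
    push_cast at hI1 hI2
    rw [Nat.superFactorial_succ]
    push_cast
    have hQ1 : (∏ l ∈ range (m+2), ((k+l+(m+1)).factorial : ℚ)) ≠ 0 :=
      Finset.prod_ne_zero_iff.mpr fun i _ => (factq_pos _).ne'
    have hQ2 : (∏ l ∈ range (m+1), ((k+2+l+m).factorial : ℚ)) ≠ 0 :=
      Finset.prod_ne_zero_iff.mpr fun i _ => (factq_pos _).ne'
    have h1 := (factq_pos (k+m+1)).ne'
    have h2 := (factq_pos (k+m+2)).ne'
    field_simp
    simp only [show m+1+1 = m+2 from rfl, show ∀ x : ℕ, k+x+m+1 = k+x+(m+1) from fun _ => rfl]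
    linear_combination
      ((Nat.superFactorial m : ℚ) *
        (∏ x ∈ range (m+2), (Nat.factorial (k+x) : ℚ)) * (Nat.factorial (k+m+2) : ℚ)) * hI2
      - ((Nat.superFactorial m : ℚ) *
        ∏ x ∈ range (m+2), (Nat.factorial (k+x+(m+1)) : ℚ)) * hI1
  · rw [keyDet m' k]
    apply ne_of_gt
    apply mul_pos
    · exact_mod_cast sf_pos m'
    · exact Finset.prod_pos fun l _ => div_pos (factq_pos _) (factq_pos _)
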